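/- Fix r ≥ 1. Let λ ≺_r μ, λ ≺_r ν, μ ≺_r κ, ν ≺_r κ with μ ≠ ν (so κ covers both μ and ν, and λ is covered by both, in the r-rim hook order). Then hgt(κ/μ) + hgt(κ/ν) = hgt(μ/λ) + hgt(ν/λ). Specifically, if the heads of μ/λ and κ/ν lie on diagonal d_s and those of ν/λ and κ/μ on diagonal d_t, then s−t ∉ {−r, 0, r}; if |s−t| > r the heights match pairwise, while if |s−t| < r one pair increases by 1 and the other decreases by 1. -/

import Mathlib

open scoped Classical

/-- A doubly infinite bit sequence: a function `ℤ → ℕ` with all values `≤ 1`. -/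
def IsBitSeq (s : ℤ → ℕ) : Prop := ∀ i, s i ≤ 1

/-- The quadruple `(w (i-r), t (i-r), s i, w i)` equals `(1,0,0,1)`:
the strip `t/s` with witness `w` has an `r`-ribbon at position `i`. -/
def Quad (r : ℕ) (s t w : ℤ → ℕ) (i : ℤ) : Prop :=
  w (i - r) = 1 ∧ t (i - r) = 0 ∧ s i = 0 ∧ w i = 1

/-- `w` is a witness for `t/s` being a horizontal `r`-ribbon strip: for every `i`, the
quadruple `(w (i-r), t (i-r), s i, w i)` is of the form `(a,a,b,b)` or equals `(1,0,0,1)`,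
the latter happening only finitely often. -/
def IsWitness (r : ℕ) (s t w : ℤ → ℕ) : Prop :=
  (∀ i : ℤ, (w (i - r) = t (i - r) ∧ s i = w i) ∨ Quad r s t w i) ∧
    {i : ℤ | Quad r s t w i}.Finite

/-- `t/s` is a horizontal `r`-ribbon strip (`s ≤ʰᵣ t`). -/
def HStrip (r : ℕ) (s t : ℤ → ℕ) : Prop := ∃ w, IsWitness r s t w

/-- The height `∑_{j=1}^{r-1} w (i - j)` of a ribbon at position `i` read off from `w`. -/
def hgtAt (r : ℕ) (w : ℤ → ℕ) (i : ℤ) : ℕ := ∑ j ∈ Finset.Ico 1 r, w (i - (j : ℤ))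

/-- A partition: a weakly decreasing, eventually zero function `ℕ → ℕ`. -/
def IsPartition (f : ℕ → ℕ) : Prop :=
  (∀ i j : ℕ, i ≤ j → f j ≤ f i) ∧ ∃ N : ℕ, ∀ n : ℕ, N ≤ n → f n = 0

/-- The edge sequence of a partition: bit `1` exactly at the positions `f j - j - 1`
(for `j : ℕ`); it is eventually `1` to the left and `0` to the right, and adding a
square on diagonal `k` replaces the substring `10` at positions `(k-1, k)` by `01`. -/
noncomputable def edgeSeq (f : ℕ → ℕ) (k : ℤ) : ℕ :=
  if ∃ j : ℕ, (f j : ℤ) - (j : ℤ) - 1 = k then 1 else 0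

/-- `t` is obtained from `s` by adding one `r`-ribbon with head on diagonal `p`:
the two sequences differ exactly at positions `p - r` and `p`, where the bits
`(1,0)` of `s` become `(0,1)` in `t`. -/
def EdgeFlip (r : ℕ) (s t : ℤ → ℕ) (p : ℤ) : Prop :=
  s (p - r) = 1 ∧ s p = 0 ∧ t (p - r) = 0 ∧ t p = 1 ∧
    ∀ j : ℤ, j ≠ p - r → j ≠ p → s j = t j

/-- Conservation of height around a square: if `λ ≺ᵣ μ, ν ≺ᵣ κ` with `μ ≠ ν`, where the
heads of `μ/λ` and `κ/ν` lie on diagonal `s` and those of `ν/λ` and `κ/μ` on diagonal `t`,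
then `s - t ∉ {-r, 0, r}`, the total height is conserved, heights match pairwise when
`|s - t| > r`, and one pair increases by `1` while the other decreases by `1` when
`|s - t| < r`. -/
private lemma sa_of_partition {f : ℕ → ℕ} (hf : IsPartition f) :
    StrictAnti (fun j : ℕ => (f j : ℤ) - j - 1) := by
  intro i j hij
  have h1 : f j ≤ f i := hf.1 i j hij.le
  have h1' : (f j : ℤ) ≤ (f i : ℤ) := by exact_mod_cast h1
  have h2 : (i : ℤ) < (j : ℤ) := by exact_mod_cast hij
  simp only
  omega

private lemma range_eq_inj {g h : ℕ → ℤ} (hg : StrictAnti g) (hh : StrictAnti h)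
    (hiff : ∀ k, (∃ j, g j = k) ↔ (∃ j, h j = k)) : g = h := by
  funext n
  induction n using Nat.strong_induction_on with
  | _ n ih =>
    obtain ⟨i, hi⟩ := (hiff (g n)).1 ⟨n, rfl⟩
    rcases lt_trichotomy i n with hlt | heq | hgt
    · have e := ih i hlt
      have := hg hlt
      omega
    · subst heq; exact hi.symm
    · have h1 : h i < h n := hh hgt
      obtain ⟨k, hk⟩ := (hiff (h n)).2 ⟨n, rfl⟩
      rcases lt_or_ge k n with hkn | hkn
      · have e := ih k hkn
        have := hh hkn
        omega
      · have : g k ≤ g n := hg.antitone hkn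
        omega

private lemma edgeSeq_inj {f g : ℕ → ℕ} (hf : IsPartition f) (hg : IsPartition g)
    (h : edgeSeq f = edgeSeq g) : f = g := by
  have key : (fun j : ℕ => (f j : ℤ) - j - 1) = (fun j : ℕ => (g j : ℤ) - j - 1) := by
    apply range_eq_inj (sa_of_partition hf) (sa_of_partition hg)
    intro k
    have hk := congrFun h k
    unfold edgeSeq at hk
    constructor
    · intro hex
      by_contra hne
      rw [if_pos hex, if_neg hne] at hk
      exact one_ne_zero hk
    · intro hex
      by_contra hne
      rw [if_neg hne, if_pos hex] at hk
      exact zero_ne_one hk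
  funext j
  have := congrFun key j
  omega

private lemma hgt_far {r : ℕ} {L M : ℤ → ℕ} {p : ℤ} (h : EdgeFlip r L M p)
    (q : ℤ) (hfar : (r : ℤ) < q - p ∨ q - p < -(r : ℤ)) :
    hgtAt r M q = hgtAt r L q := by
  obtain ⟨hL1, hL0, hM0, hM1, heq⟩ := h
  unfold hgtAt
  apply Finset.sum_congr rfl
  intro j hj
  rw [Finset.mem_Ico] at hj
  have hj1 : (1 : ℤ) ≤ (j : ℤ) := by exact_mod_cast hj.1
  have hj2 : (j : ℤ) < (r : ℤ) := by exact_mod_cast hj.2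
  refine (heq _ ?_ ?_).symm <;> intro hc <;> omega

private lemma hgt_inc {r : ℕ} {L M : ℤ → ℕ} {p : ℤ} (h : EdgeFlip r L M p)
    (q : ℤ) (ha : 0 < q - p) (hb : q - p < (r : ℤ)) :
    hgtAt r M q = hgtAt r L q + 1 := by
  obtain ⟨hL1, hL0, hM0, hM1, heq⟩ := h
  set j0 : ℕ := (q - p).toNat with hj0
  have hj0z : (j0 : ℤ) = q - p := Int.toNat_of_nonneg ha.le
  have hmem : j0 ∈ Finset.Ico 1 r := by
    rw [Finset.mem_Ico]
    constructor
    · omega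
    · exact_mod_cast (hj0z ▸ hb : (j0 : ℤ) < (r : ℤ))
  have hrest : ∀ j ∈ (Finset.Ico 1 r).erase j0,
      M (q - (j : ℤ)) = L (q - (j : ℤ)) := by
    intro j hj
    rw [Finset.mem_erase, Finset.mem_Ico] at hj
    have hj1 : (1 : ℤ) ≤ (j : ℤ) := by exact_mod_cast hj.2.1
    have hj2 : (j : ℤ) < (r : ℤ) := by exact_mod_cast hj.2.2
    have hjne : (j : ℤ) ≠ (j0 : ℤ) := by exact_mod_cast hj.1
    refine (heq _ ?_ ?_).symm <;> intro hc <;> omega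
  have hqp : q - (j0 : ℤ) = p := by omega
  have e1 : hgtAt r M q = M p + ∑ j ∈ (Finset.Ico 1 r).erase j0, M (q - (j : ℤ)) := by
    unfold hgtAt
    rw [← Finset.add_sum_erase _ _ hmem, hqp]
  have e2 : hgtAt r L q = L p + ∑ j ∈ (Finset.Ico 1 r).erase j0, L (q - (j : ℤ)) := by
    unfold hgtAt
    rw [← Finset.add_sum_erase _ _ hmem, hqp]
  rw [e1, e2, hM1, hL0, Finset.sum_congr rfl hrest]
  omega

private lemma hgt_dec {r : ℕ} {L M : ℤ → ℕ} {p : ℤ} (h : EdgeFlip r L M p)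
    (q : ℤ) (ha : 0 < p - q) (hb : p - q < (r : ℤ)) :
    hgtAt r M q + 1 = hgtAt r L q := by
  obtain ⟨hL1, hL0, hM0, hM1, heq⟩ := h
  set j1 : ℕ := (q - p + r).toNat with hj1
  have hj1z : (j1 : ℤ) = q - p + r := Int.toNat_of_nonneg (by omega)
  have hmem : j1 ∈ Finset.Ico 1 r := by
    rw [Finset.mem_Ico]
    constructor
    · omega
    · exact_mod_cast (hj1z ▸ (by omega : q - p + (r : ℤ) < (r : ℤ)) : (j1 : ℤ) < (r : ℤ))
  have hrest : ∀ j ∈ (Finset.Ico 1 r).erase j1,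
      M (q - (j : ℤ)) = L (q - (j : ℤ)) := by
    intro j hj
    rw [Finset.mem_erase, Finset.mem_Ico] at hj
    have hja : (1 : ℤ) ≤ (j : ℤ) := by exact_mod_cast hj.2.1
    have hjb : (j : ℤ) < (r : ℤ) := by exact_mod_cast hj.2.2
    have hjne : (j : ℤ) ≠ (j1 : ℤ) := by exact_mod_cast hj.1
    refine (heq _ ?_ ?_).symm <;> intro hc <;> omega
  have hqp : q - (j1 : ℤ) = p - r := by omega
  have e1 : hgtAt r M q = M (p - r) + ∑ j ∈ (Finset.Ico 1 r).erase j1, M (q - (j : ℤ)) := by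
    unfold hgtAt
    rw [← Finset.add_sum_erase _ _ hmem, hqp]
  have e2 : hgtAt r L q = L (p - r) + ∑ j ∈ (Finset.Ico 1 r).erase j1, L (q - (j : ℤ)) := by
    unfold hgtAt
    rw [← Finset.add_sum_erase _ _ hmem, hqp]
  rw [e1, e2, hM0, hL1, Finset.sum_congr rfl hrest]
  omega

theorem stmt7 (r : ℕ) (hr : 1 ≤ r) (lam mu nu kap : ℕ → ℕ)
    (hlam : IsPartition lam) (hmu : IsPartition mu) (hnu : IsPartition nu)
    (hkap : IsPartition kap) (hne : mu ≠ nu) (s t : ℤ)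
    (h1 : EdgeFlip r (edgeSeq lam) (edgeSeq mu) s)
    (h2 : EdgeFlip r (edgeSeq lam) (edgeSeq nu) t)
    (h3 : EdgeFlip r (edgeSeq nu) (edgeSeq kap) s)
    (h4 : EdgeFlip r (edgeSeq mu) (edgeSeq kap) t) :
    (s - t ≠ 0 ∧ s - t ≠ (r : ℤ) ∧ s - t ≠ -(r : ℤ)) ∧
    hgtAt r (edgeSeq mu) t + hgtAt r (edgeSeq nu) s
      = hgtAt r (edgeSeq lam) s + hgtAt r (edgeSeq lam) t ∧
    (((r : ℤ) < s - t ∨ s - t < -(r : ℤ)) →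
      hgtAt r (edgeSeq mu) t = hgtAt r (edgeSeq lam) t ∧
      hgtAt r (edgeSeq nu) s = hgtAt r (edgeSeq lam) s) ∧
    ((-(r : ℤ) < s - t ∧ s - t < 0) →
      hgtAt r (edgeSeq mu) t = hgtAt r (edgeSeq lam) t + 1 ∧
      hgtAt r (edgeSeq nu) s + 1 = hgtAt r (edgeSeq lam) s) ∧
    ((0 < s - t ∧ s - t < (r : ℤ)) →
      hgtAt r (edgeSeq mu) t + 1 = hgtAt r (edgeSeq lam) t ∧
      hgtAt r (edgeSeq nu) s = hgtAt r (edgeSeq lam) s + 1) := by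
  have hst : s ≠ t := by
    intro hst
    apply hne
    apply edgeSeq_inj hmu hnu
    funext j
    obtain ⟨a1, a2, a3, a4, a5⟩ := h1
    obtain ⟨b1, b2, b3, b4, b5⟩ := h2
    subst hst
    by_cases hj1 : j = s - r
    · rw [hj1, a3, b3]
    by_cases hj2 : j = s
    · rw [hj2, a4, b4]
    · rw [← a5 j hj1 hj2, ← b5 j hj1 hj2]
  have hd0 : s - t ≠ 0 := fun hc => hst (by omega)
  have hdr : s - t ≠ (r : ℤ) := by
    intro hc
    have e1 : edgeSeq lam (s - r) = 1 := h1.1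
    have e2 : edgeSeq lam t = 0 := h2.2.1
    have : s - (r : ℤ) = t := by omega
    rw [this] at e1
    omega
  have hdr' : s - t ≠ -(r : ℤ) := by
    intro hc
    have e1 : edgeSeq lam (t - r) = 1 := h2.1
    have e2 : edgeSeq lam s = 0 := h1.2.1
    have : t - (r : ℤ) = s := by omega
    rw [this] at e1
    omega
  refine ⟨⟨hd0, hdr, hdr'⟩, ?_, ?_, ?_, ?_⟩
  · rcases lt_trichotomy (s - t) 0 with hc | hc | hc
    · rcases lt_trichotomy (s - t) (-(r : ℤ)) with hc' | hc' | hc'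
      · rw [hgt_far h1 t (by omega), hgt_far h2 s (by omega)]
        omega
      · exact absurd hc' hdr'
      · have e1 := hgt_inc h1 t (by omega) (by omega)
        have e2 := hgt_dec h2 s (by omega) (by omega)
        omega
    · exact absurd hc hd0
    · rcases lt_trichotomy (s - t) ((r : ℤ)) with hc' | hc' | hc'
      · have e1 := hgt_dec h1 t (by omega) (by omega)
        have e2 := hgt_inc h2 s (by omega) (by omega)
        omega
      · exact absurd hc' hdr
      · rw [hgt_far h1 t (by omega), hgt_far h2 s (by omega)]
        omega
  · intro hfar
    exact ⟨hgt_far h1 t (by omega), hgt_far h2 s (by omega)⟩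
  · intro ⟨ha, hb⟩
    exact ⟨hgt_inc h1 t (by omega) (by omega), hgt_dec h2 s (by omega) (by omega)⟩
  · intro ⟨ha, hb⟩
    exact ⟨hgt_dec h1 t (by omega) (by omega), hgt_inc h2 s (by omega) (by omega)⟩
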